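/- In ℤQ for Q a finite tree quiver, given a section Σ containing a vertex M and a finite set S of vertices of ℤQ with M ∉ S such that no two elements of S are related by τ^{±1} (i.e. τs, τ⁻¹s ∉ S for all s ∈ S), there exists a section Σ' of ℤQ containing M with Σ' ∩ S = ∅. -/

import Mathlib

/- STATEMENT 15: In ℤQ for Q a finite tree quiver, given a section Sigma containing M and
   a finite set S of vertices with M ∉ S and no two elements of S related by τ^{±1},
   there is a section Sig containing M with Sig ∩ S = ∅. -/

namespace Stmt15

variable {Q0 : Type*}

def ZArrow (QArrow : Q0 → Q0 → Prop) : ℤ × Q0 → ℤ × Q0 → Prop :=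
  fun x y => (y.1 = x.1 ∧ QArrow x.2 y.2) ∨ (y.1 = x.1 + 1 ∧ QArrow y.2 x.2)

def tauZQ (Q0 : Type*) : Equiv.Perm (ℤ × Q0) :=
  ⟨fun x => (x.1 - 1, x.2), fun x => (x.1 + 1, x.2),
    fun x => by simp, fun x => by simp⟩

def IsPathOn {V : Type*} (Arrow : V → V → Prop) (p : ℕ → V) (t : ℕ) : Prop :=
  ∀ i < t, Arrow (p i) (p (i + 1))

def ConnectedOn {V : Type*} (Arrow : V → V → Prop) (S : Set V) : Prop :=
  ∀ x ∈ S, ∀ y ∈ S, Relation.ReflTransGen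
    (fun a b => a ∈ S ∧ b ∈ S ∧ (Arrow a b ∨ Arrow b a)) x y

def IsSection {V : Type*} (Arrow : V → V → Prop) (τ : Equiv.Perm V) (S : Set V) : Prop :=
  ConnectedOn Arrow S ∧
  (∀ (p : ℕ → V) (t : ℕ), 0 < t → IsPathOn Arrow p t → (∀ i ≤ t, p i ∈ S) → p 0 ≠ p t) ∧
  (∀ x : V, ∃! n : ℤ, (τ ^ n) x ∈ S) ∧
  (∀ (p : ℕ → V) (t : ℕ), IsPathOn Arrow p t → p 0 ∈ S → p t ∈ S → ∀ i ≤ t, p i ∈ S)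

def underlyingGraph (QArrow : Q0 → Q0 → Prop) : SimpleGraph Q0 where
  Adj a b := a ≠ b ∧ (QArrow a b ∨ QArrow b a)
  symm := ⟨fun _ _ h => ⟨h.1.symm, h.2.symm⟩⟩
  loopless := ⟨fun _ h => h.1 rfl⟩

lemma tauZQ_inv_apply (x : ℤ × Q0) : (tauZQ Q0)⁻¹ x = (x.1 + 1, x.2) := by
  rw [Equiv.Perm.inv_def]; rfl

lemma tauZQ_zpow (n : ℤ) : ∀ x : ℤ × Q0, ((tauZQ Q0) ^ n) x = (x.1 - n, x.2) := by
  induction n using Int.induction_on with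
  | zero => intro x; simp
  | succ k ih =>
    intro x
    rw [zpow_add, zpow_one, Equiv.Perm.mul_apply,
      show (tauZQ Q0) x = (x.1 - 1, x.2) from rfl, ih]
    simp; ring
  | pred k ih =>
    intro x
    rw [show -(k:ℤ) - 1 = -(k:ℤ) + (-1) by ring, zpow_add, zpow_neg_one,
      Equiv.Perm.mul_apply, tauZQ_inv_apply, ih]
    simp; ring

lemma nb_walk {V : Type*} {G : SimpleGraph V} (hG : G.IsAcyclic) :
    ∀ t, ∀ q : ℕ → V, (∀ i < t, G.Adj (q i) (q (i+1))) →
      (∀ i, i + 2 ≤ t → q (i+2) ≠ q i) → 0 < t → q 0 ≠ q t := by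
  intro t
  induction t using Nat.strong_induction_on with
  | _ t IH =>
  intro q hadj hnb ht heq
  by_cases hrep : ∃ i j, i < j ∧ j ≤ t ∧ j - i < t ∧ q i = q j
  · obtain ⟨i, j, hij, hjt, hlt, hq⟩ := hrep
    exact IH (j - i) hlt (fun k => q (i + k))
      (fun k hk => by
        have : i + k < t := by omega
        have := hadj (i+k) this
        simpa [Nat.add_assoc] using this)
      (fun k hk => by
        have h2 : (i + k) + 2 ≤ t := by omega
        have := hnb (i + k) h2
        simpa [show i + (k+2) = (i+k)+2 by omega] using this)
      (by omega)
      (by simp only [Nat.add_zero]; rw [show i + (j - i) = j by omega, ← hq])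
  · push_neg at hrep
    -- only repeat is (0, t)
    have hinj : ∀ i j, i < j → j ≤ t → q i = q j → (i = 0 ∧ j = t) := by
      intro i j hij hjt hq
      have := hrep i j hij hjt
      by_contra hc
      have : ¬ (j - i < t) := fun hlt => (this hlt) hq
      omega
    rcases Nat.lt_or_ge t 3 with h3 | h3
    · interval_cases t
      · exact (hadj 0 (by omega)).ne heq
      · exact hnb 0 (by omega) heq.symm
    · -- t ≥ 3 : cycle contradicts bridge
      have hbr : G.IsBridge s(q 0, q 1) :=
        SimpleGraph.isAcyclic_iff_forall_adj_isBridge.mp hG (hadj 0 (by omega))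
      rw [SimpleGraph.isBridge_iff] at hbr
      apply hbr
      have key : ∀ k, 1 ≤ k → k ≤ t → (G \ SimpleGraph.fromEdgeSet {s(q 0, q 1)}).Reachable (q 1) (q k) := by
        intro k
        induction k with
        | zero => omega
        | succ k ihk =>
          intro _ hk1
          rcases Nat.eq_zero_or_pos k with rfl | hk0
          · exact SimpleGraph.Reachable.refl _
          · refine (ihk hk0 (by omega)).trans (SimpleGraph.Adj.reachable ?_)
            rw [SimpleGraph.sdiff_adj, SimpleGraph.fromEdgeSet_adj]
            refine ⟨hadj k (by omega), ?_⟩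
            simp only [Set.mem_singleton_iff, Sym2.eq, Sym2.rel_iff', Prod.mk.injEq, Prod.swap_prod_mk]
            rintro ⟨h | h, -⟩
            · obtain ⟨h1, h2⟩ := h
              have := hinj 0 k (by omega) (by omega) h1.symm
              omega
            · obtain ⟨h1, h2⟩ := h
              have hkt := hinj 0 (k+1) (by omega) (by omega) h2.symm
              have : k = t - 1 := by omega
              subst this
              rcases Nat.lt_or_ge 1 (t-1) with h' | h'
              · have := hinj 1 (t-1) h' (by omega) h1.symm
                omega
              · omega
      have hra := key t (by omega) le_rfl
      rw [← heq] at hra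
      exact hra.symm

open Classical in
noncomputable def pick (QArrow : Q0 → Q0 → Prop) (S : Set (ℤ × Q0)) (a b : Q0) (v : ℤ) : ℤ :=
  if (v, a) ∈ S then (if QArrow a b then v + 1 else v - 1) else v

lemma pick_avoid {QArrow : Q0 → Q0 → Prop} {S : Set (ℤ × Q0)}
    (hS : ∀ (n : ℤ) (c : Q0), (n, c) ∈ S → (n + 1, c) ∉ S ∧ (n - 1, c) ∉ S)
    (a b : Q0) (v : ℤ) : (pick QArrow S a b v, a) ∉ S := by
  unfold pick
  split_ifs with h1 h2
  · exact (hS v a h1).1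
  · exact (hS v a h1).2
  · exact h1

lemma pick_cases (QArrow : Q0 → Q0 → Prop) (S : Set (ℤ × Q0)) (a b : Q0) (v : ℤ) :
    pick QArrow S a b v = v ∨ (QArrow a b ∧ pick QArrow S a b v = v + 1) ∨
      (¬ QArrow a b ∧ pick QArrow S a b v = v - 1) := by
  unfold pick
  split_ifs with h1 h2
  · exact Or.inr (Or.inl ⟨h2, rfl⟩)
  · exact Or.inr (Or.inr ⟨h2, rfl⟩)
  · exact Or.inl rfl

noncomputable def hval (QArrow : Q0 → Q0 → Prop) (S : Set (ℤ × Q0)) (m : ℤ) {root : Q0} :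
    {a : Q0} → (underlyingGraph QArrow).Walk a root → ℤ
  | _, SimpleGraph.Walk.nil => m
  | a, SimpleGraph.Walk.cons (v := b) _ w => pick QArrow S a b (hval QArrow S m w)

lemma hval_nil (QArrow : Q0 → Q0 → Prop) (S : Set (ℤ × Q0)) (m : ℤ) (root : Q0) :
    hval QArrow S m (SimpleGraph.Walk.nil (u := root)) = m := by simp [hval]

lemma hval_cons (QArrow : Q0 → Q0 → Prop) (S : Set (ℤ × Q0)) (m : ℤ) {root a b : Q0}
    (h : (underlyingGraph QArrow).Adj a b) (w : (underlyingGraph QArrow).Walk b root) :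
    hval QArrow S m (SimpleGraph.Walk.cons h w) = pick QArrow S a b (hval QArrow S m w) := by simp [hval]

lemma hval_avoid {QArrow : Q0 → Q0 → Prop} {S : Set (ℤ × Q0)} {m : ℤ} {root : Q0}
    (hS : ∀ (n : ℤ) (c : Q0), (n, c) ∈ S → (n + 1, c) ∉ S ∧ (n - 1, c) ∉ S)
    (hm : (m, root) ∉ S) :
    ∀ {a : Q0} (w : (underlyingGraph QArrow).Walk a root), (hval QArrow S m w, a) ∉ S := by
  intro a w
  induction w with
  | nil => rw [hval_nil]; exact hm
  | cons h w ih => rw [hval_cons]; exact pick_avoid hS _ _ _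


lemma sig_level {QArrow : Q0 → Q0 → Prop} {Sig : Set (ℤ × Q0)}
    (hSig : IsSection (ZArrow QArrow) (tauZQ Q0) Sig) (q : Q0) :
    ∃ n : ℤ, (n, q) ∈ Sig ∧ ∀ k : ℤ, (k, q) ∈ Sig → k = n := by
  obtain ⟨n₀, hn₀, hu⟩ := hSig.2.2.1 (0, q)
  rw [tauZQ_zpow] at hn₀
  refine ⟨-n₀, by simpa using hn₀, ?_⟩
  intro k hk
  have : ((tauZQ Q0) ^ (-k)) (0, q) ∈ Sig := by rw [tauZQ_zpow]; simpa
  have := hu (-k) this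
  omega

lemma sig_noloop {QArrow : Q0 → Q0 → Prop} {Sig : Set (ℤ × Q0)}
    (hSig : IsSection (ZArrow QArrow) (tauZQ Q0) Sig) (a : Q0) : ¬ QArrow a a := by
  intro ha
  obtain ⟨n, hn, -⟩ := sig_level hSig a
  exact hSig.2.1 (fun _ => (n, a)) 1 one_pos
    (fun i _ => Or.inl ⟨rfl, ha⟩) (fun i _ => hn) rfl

lemma sig_constraint {QArrow : Q0 → Q0 → Prop} {Sig : Set (ℤ × Q0)}
    (hSig : IsSection (ZArrow QArrow) (tauZQ Q0) Sig)
    {a b : Q0} (hab : QArrow a b) {n k : ℤ} (hna : (n, a) ∈ Sig) (hkb : (k, b) ∈ Sig)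
    (hub : ∀ j : ℤ, (j, b) ∈ Sig → j = k) :
    k = n ∨ n = k + 1 := by
  rcases le_or_gt n k with h | h
  · -- upward zigzag from (n,a) to (k,b); get k = n
    left
    set p : ℕ → ℤ × Q0 := fun i => (n + ((i / 2 : ℕ) : ℤ), if i % 2 = 0 then a else b) with hp
    set t : ℕ := 2 * (k - n).toNat + 1 with htdef
    have hpath : IsPathOn (ZArrow QArrow) p t := by
      intro i _
      rcases Nat.even_or_odd i with ⟨j, rfl⟩ | ⟨j, rfl⟩
      · refine Or.inl ⟨?_, ?_⟩
        · show n + (((j + j + 1) / 2 : ℕ) : ℤ) = n + (((j + j) / 2 : ℕ) : ℤ)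
          congr 2
          omega
        · show QArrow (if (j + j) % 2 = 0 then a else b) (if (j + j + 1) % 2 = 0 then a else b)
          rw [if_pos (by omega), if_neg (by omega)]
          exact hab
      · refine Or.inr ⟨?_, ?_⟩
        · show n + (((2 * j + 1 + 1) / 2 : ℕ) : ℤ) = n + (((2 * j + 1) / 2 : ℕ) : ℤ) + 1
          rw [show (2 * j + 1 + 1) / 2 = j + 1 from by omega,
            show (2 * j + 1) / 2 = j from by omega]
          push_cast; ring
        · show QArrow (if (2 * j + 1 + 1) % 2 = 0 then a else b) (if (2 * j + 1) % 2 = 0 then a else b)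
          rw [if_pos (by omega), if_neg (by omega)]
          exact hab
    have hp0 : p 0 = (n, a) := by simp [hp]
    have hpt : p t = (k, b) := by
      simp only [hp, htdef]
      rw [if_neg (by omega), show (2 * (k - n).toNat + 1) / 2 = (k - n).toNat from by omega]
      rw [Int.toNat_of_nonneg (by omega)]
      simp
    have hall := hSig.2.2.2 p t hpath (by rw [hp0]; exact hna) (by rw [hpt]; exact hkb)
    by_contra hne
    have h1t : 1 ≤ t := by omega
    have hmem1 := hall 1 h1t
    have hp1 : p 1 = (n, b) := by simp [hp]
    rw [hp1] at hmem1
    have := hub n hmem1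
    omega
  · -- downward: from (k,b) up to (n,a); get n = k + 1
    right
    set q : ℕ → ℤ × Q0 := fun i => (k + (((i + 1) / 2 : ℕ) : ℤ), if i % 2 = 0 then b else a) with hq
    set t : ℕ := 2 * (n - k).toNat - 1 with htdef
    have hnk : 1 ≤ (n - k).toNat := by omega
    have hpath : IsPathOn (ZArrow QArrow) q t := by
      intro i _
      rcases Nat.even_or_odd i with ⟨j, rfl⟩ | ⟨j, rfl⟩
      · refine Or.inr ⟨?_, ?_⟩
        · show k + (((j + j + 1 + 1) / 2 : ℕ) : ℤ) = k + (((j + j + 1) / 2 : ℕ) : ℤ) + 1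
          rw [show (j + j + 1 + 1) / 2 = j + 1 from by omega,
            show (j + j + 1) / 2 = j from by omega]
          push_cast; ring
        · show QArrow (if (j + j + 1) % 2 = 0 then b else a) (if (j + j) % 2 = 0 then b else a)
          rw [if_neg (by omega), if_pos (by omega)]
          exact hab
      · refine Or.inl ⟨?_, ?_⟩
        · show k + (((2 * j + 1 + 1 + 1) / 2 : ℕ) : ℤ) = k + (((2 * j + 1 + 1) / 2 : ℕ) : ℤ)
          congr 2
          omega
        · show QArrow (if (2 * j + 1) % 2 = 0 then b else a) (if (2 * j + 1 + 1) % 2 = 0 then b else a)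
          rw [if_neg (by omega), if_pos (by omega)]
          exact hab
    have hq0 : q 0 = (k, b) := by simp [hq]
    have hqt : q t = (n, a) := by
      simp only [hq, htdef]
      rw [if_neg (by omega), show (2 * (n - k).toNat - 1 + 1) / 2 = (n - k).toNat from by omega]
      rw [Int.toNat_of_nonneg (by omega)]
      simp
    have hall := hSig.2.2.2 q t hpath (by rw [hq0]; exact hkb) (by rw [hqt]; exact hna)
    by_contra hne
    have h2t : 2 ≤ t := by omega
    have hmem2 := hall 2 h2t
    have hq2 : q 2 = (k + 1, b) := by simp [hq]
    rw [hq2] at hmem2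
    have := hub (k + 1) hmem2
    omega

lemma sig_no2 {QArrow : Q0 → Q0 → Prop} {Sig : Set (ℤ × Q0)}
    (hSig : IsSection (ZArrow QArrow) (tauZQ Q0) Sig)
    {a b : Q0} (hab : QArrow a b) (hba : QArrow b a) : False := by
  obtain ⟨n, hna, hua⟩ := sig_level hSig a
  obtain ⟨k, hkb, hub⟩ := sig_level hSig b
  have h1 := sig_constraint hSig hab hna hkb hub
  have h2 := sig_constraint hSig hba hkb hna hua
  have hnk : n = k := by omega
  subst hnk
  exact hSig.2.1 (fun i => if i % 2 = 0 then (n, a) else (n, b)) 2 two_pos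
    (by
      intro i hi
      interval_cases i
      · exact Or.inl ⟨rfl, hab⟩
      · exact Or.inl ⟨rfl, hba⟩)
    (by
      intro i hi
      split_ifs
      · exact hna
      · exact hkb)
    (by simp)

theorem section_avoiding_finite_set
    [Fintype Q0] (QArrow : Q0 → Q0 → Prop)
    -- Q is a tree quiver
    (hTree : (underlyingGraph QArrow).IsTree)
    -- a section Sigma containing a vertex M
    (Sig : Set (ℤ × Q0)) (hSig : IsSection (ZArrow QArrow) (tauZQ Q0) Sig)
    (M : ℤ × Q0) (hM : M ∈ Sig)
    -- a finite set S avoiding M with no two elements related by τ^{±1}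
    (S : Set (ℤ × Q0)) (hSfin : S.Finite) (hMS : M ∉ S)
    (hτS : ∀ s ∈ S, (tauZQ Q0) s ∉ S ∧ (tauZQ Q0).symm s ∉ S) :
    -- conclusion: a section Sigma' containing M and disjoint from S
    ∃ T : Set (ℤ × Q0), IsSection (ZArrow QArrow) (tauZQ Q0) T ∧ M ∈ T ∧ T ∩ S = ∅ := by
  classical
  obtain ⟨m, root⟩ := M
  set G := underlyingGraph QArrow with hGdef
  have hS : ∀ (n : ℤ) (c : Q0), (n, c) ∈ S → (n + 1, c) ∉ S ∧ (n - 1, c) ∉ S := by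
    intro n c h
    have := hτS (n, c) h
    exact ⟨this.2, this.1⟩
  have noloop : ∀ c : Q0, ¬ QArrow c c := sig_noloop hSig
  have no2 : ∀ c d : Q0, QArrow c d → QArrow d c → False := fun c d h h' => sig_no2 hSig h h'
  -- choose the unique path from each vertex to the root
  have hup := hTree.existsUnique_path
  have hPex : ∀ q : Q0, ∃ w : G.Walk q root, w.IsPath := fun q => (hup q root).exists
  choose P hP using hPex
  have huniq : ∀ (q : Q0) (w : G.Walk q root), w.IsPath → w = P q := by
    intro q w hw
    exact (hup q root).unique hw (hP q)
  set f : Q0 → ℤ := fun q => hval QArrow S m (P q) with hf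
  have hfroot : f root = m := by
    have h0 : (SimpleGraph.Walk.nil : G.Walk root root) = P root :=
      huniq root _ SimpleGraph.Walk.IsPath.nil
    simp only [hf]
    rw [← h0, hval_nil]
  have havoid : ∀ q : Q0, (f q, q) ∉ S := fun q => hval_avoid hS hMS (P q)
  -- key recursion relation across any edge of the tree
  have key : ∀ c d : Q0, G.Adj c d →
      f c = pick QArrow S c d (f d) ∨ f d = pick QArrow S d c (f c) := by
    intro c d hcd
    by_cases hmem : c ∈ (P d).support
    · right
      have hd : ((P d).dropUntil c hmem).IsPath := (hP d).dropUntil hmem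
      have hPc : (P d).dropUntil c hmem = P c := huniq c _ hd
      have hdnot : d ∉ (P c).support := by
        intro hbmem
        rw [← hPc] at hbmem
        have hnodup := (hP d).support_nodup
        have hspec := ((P d).take_spec hmem).symm
        rw [hspec, SimpleGraph.Walk.support_append] at hnodup
        have hdisj := List.disjoint_of_nodup_append hnodup
        refine hdisj (SimpleGraph.Walk.start_mem_support _) ?_
        rcases (SimpleGraph.Walk.mem_support_iff _).mp hbmem with h | h
        · exact absurd h hcd.ne'
        · exact h
      have hcons : (SimpleGraph.Walk.cons hcd.symm (P c)).IsPath := (hP c).cons hdnot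
      have heqw := huniq d _ hcons
      simp only [hf]
      rw [← heqw, hval_cons]
    · left
      have hcons : (SimpleGraph.Walk.cons hcd (P d)).IsPath := (hP d).cons hmem
      have heqw := huniq c _ hcons
      simp only [hf]
      rw [← heqw, hval_cons]
  -- the slice function satisfies the mesh constraints
  have hcon : ∀ c d : Q0, QArrow c d → f c = f d ∨ f c = f d + 1 := by
    intro c d hQ
    have hne : c ≠ d := by
      intro h
      exact noloop c (by rw [← h] at hQ; exact hQ)
    have hAdj : G.Adj c d := And.intro hne (Or.inl hQ)
    rcases key c d hAdj with h | h
    · rcases pick_cases QArrow S c d (f d) with h1 | ⟨_, h1⟩ | ⟨hn, h1⟩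
      · left; rw [h, h1]
      · right; rw [h, h1]
      · exact absurd hQ hn
    · rcases pick_cases QArrow S d c (f c) with h1 | ⟨hQ', _⟩ | ⟨_, h1⟩
      · left; rw [h, h1]
      · exact absurd (no2 c d hQ hQ') not_false
      · right; have h2 := h.trans h1; omega
  refine ⟨{x : ℤ × Q0 | x.1 = f x.2}, ⟨?_, ?_, ?_, ?_⟩, ?_, ?_⟩
  · -- ConnectedOn
    intro x hx y hy
    have hx1 : x.1 = f x.2 := hx
    have hy1 : y.1 = f y.2 := hy
    have hx' : x = (f x.2, x.2) := Prod.ext_iff.mpr ⟨hx1, rfl⟩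
    have hy' : y = (f y.2, y.2) := Prod.ext_iff.mpr ⟨hy1, rfl⟩
    rw [hx', hy']
    refine Relation.ReflTransGen.lift (fun c => (f c, c)) ?_
      _ _ ((SimpleGraph.reachable_iff_reflTransGen _ _).mp (hTree.isConnected.preconnected x.2 y.2))
    intro c d hcd
    refine ⟨rfl, rfl, ?_⟩
    rcases hcd.2 with hQ | hQ
    · rcases hcon c d hQ with h | h
      · exact Or.inl (Or.inl ⟨h.symm, hQ⟩)
      · exact Or.inr (Or.inr ⟨h, hQ⟩)
    · rcases hcon d c hQ with h | h
      · exact Or.inr (Or.inl ⟨h.symm, hQ⟩)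
      · exact Or.inl (Or.inr ⟨h, hQ⟩)
  · -- no cycles
    intro p t ht hpath hmemT heq
    have hsnd : ∀ i ≤ t, (p i).1 = f (p i).2 := fun i hi => hmemT i hi
    have hstep : ∀ i < t, G.Adj (p i).2 (p (i + 1)).2 := by
      intro i hi
      rcases hpath i hi with ⟨e, hQ⟩ | ⟨e, hQ⟩
      · exact And.intro (fun hq => noloop _ (by rw [hq] at hQ; exact hQ)) (Or.inl hQ)
      · refine And.intro ?_ (Or.inr hQ)
        intro hq
        have h1 := hsnd i (le_of_lt hi)
        have h2 := hsnd (i + 1) hi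
        rw [hq] at h1
        omega
    have hnb : ∀ i, i + 2 ≤ t → (p (i + 2)).2 ≠ (p i).2 := by
      intro i h2 hq
      have e0 := hsnd i (by omega)
      have e1 := hsnd (i + 1) (by omega)
      have e2 := hsnd (i + 2) (by omega)
      rw [hq] at e2
      rcases hpath i (by omega) with ⟨ea, hQ1⟩ | ⟨ea, hQ1⟩ <;>
        rcases hpath (i + 1) (by omega) with ⟨eb, hQ2⟩ | ⟨eb, hQ2⟩
      · exact no2 _ _ hQ1 (by rw [hq] at hQ2; exact hQ2)
      · have eb' : (p (i + 2)).1 = (p (i + 1)).1 + 1 := eb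
        omega
      · have eb' : (p (i + 2)).1 = (p (i + 1)).1 := eb
        omega
      · exact no2 _ _ (by rw [hq] at hQ2; exact hQ2) hQ1
    exact nb_walk hTree.2 t (fun i => (p i).2) hstep hnb ht (congrArg Prod.snd heq)
  · -- unique τ-orbit representative
    intro x
    refine ⟨x.1 - f x.2, ?_, ?_⟩
    · show ((tauZQ Q0) ^ (x.1 - f x.2)) x ∈ _
      rw [tauZQ_zpow]
      show x.1 - (x.1 - f x.2) = f x.2
      ring
    · intro y hy
      rw [tauZQ_zpow] at hy
      have h1 : x.1 - y = f x.2 := hy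
      omega
  · -- convexity
    intro p t hpath h0 htm
    have hstep : ∀ i < t, (p i).1 - f (p i).2 ≤ (p (i + 1)).1 - f (p (i + 1)).2 := by
      intro i hi
      rcases hpath i hi with ⟨e, hQ⟩ | ⟨e, hQ⟩
      · rcases hcon _ _ hQ with h | h <;> omega
      · rcases hcon _ _ hQ with h | h <;> omega
    have hmono : ∀ j, j ≤ t → ∀ i ≤ j, (p i).1 - f (p i).2 ≤ (p j).1 - f (p j).2 := by
      intro j
      induction j with
      | zero =>
        intro _ i hi
        interval_cases i
        exact le_rfl
      | succ j ihj =>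
        intro hjt i hij
        rcases Nat.eq_or_lt_of_le hij with rfl | hlt
        · exact le_rfl
        · exact (ihj (by omega) i (by omega)).trans (hstep j (by omega))
    intro i hi
    have h0' : (p 0).1 = f (p 0).2 := h0
    have ht' : (p t).1 = f (p t).2 := htm
    have h1 := hmono i hi 0 (Nat.zero_le _)
    have h2 := hmono t le_rfl i hi
    show (p i).1 = f (p i).2
    omega
  · -- M ∈ T
    show m = f root
    exact hfroot.symm
  · -- T ∩ S = ∅
    apply Set.eq_empty_iff_forall_notMem.mpr
    rintro x ⟨hxT, hxS⟩
    have hx1 : x.1 = f x.2 := hxT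
    have hx' : x = (f x.2, x.2) := Prod.ext_iff.mpr ⟨hx1, rfl⟩
    rw [hx'] at hxS
    exact havoid x.2 hxS

end Stmt15
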